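/- Let A, B, C > 0 and J(w,u,v) = (A|v|² + B|w|², A|v|² + C|u|²) on ℂ³ ≅ ℝ⁶. For t > 0, the fibre F = J⁻¹(t,t) is a 4-dimensional real algebraic variety whose singular locus is exactly the circle {(0, 0, v) : A|v|² = t}. -/

import Mathlib

open Complex

noncomputable def Dsq (z : ℂ) : ℂ →L[ℝ] ℝ :=
  (2*z.re) • Complex.reCLM + (2*z.im) • Complex.imCLM

lemma hasFDerivAt_normSq' (z : ℂ) : HasFDerivAt Complex.normSq (Dsq z) z := by
  have h : HasFDerivAt (fun w : ℂ => w.re*w.re + w.im*w.im)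
      (Dsq z) z := by
    have h1 := (Complex.reCLM.hasFDerivAt (x := z)).mul (Complex.reCLM.hasFDerivAt (x := z))
    have h2 := (Complex.imCLM.hasFDerivAt (x := z)).mul (Complex.imCLM.hasFDerivAt (x := z))
    have := h1.add h2
    refine this.congr_fderiv ?_
    ext w
    simp [Dsq]
    ring
  exact h.congr_of_eventuallyEq (by filter_upwards with w; exact (Complex.normSq_apply w))

lemma Dsq_self (z : ℂ) : Dsq z z = 2 * Complex.normSq z := by
  simp [Dsq, Complex.normSq_apply]; ring

noncomputable def P1 : (ℂ × ℂ × ℂ) →L[ℝ] ℂ := ContinuousLinearMap.fst ℝ ℂ (ℂ × ℂ)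
noncomputable def P2 : (ℂ × ℂ × ℂ) →L[ℝ] ℂ :=
  (ContinuousLinearMap.fst ℝ ℂ ℂ).comp (ContinuousLinearMap.snd ℝ ℂ (ℂ × ℂ))
noncomputable def P3 : (ℂ × ℂ × ℂ) →L[ℝ] ℂ :=
  (ContinuousLinearMap.snd ℝ ℂ ℂ).comp (ContinuousLinearMap.snd ℝ ℂ (ℂ × ℂ))

lemma myHasFDeriv (a b : ℝ) (p : ℂ × ℂ × ℂ) (P : (ℂ × ℂ × ℂ) →L[ℝ] ℂ) :
    HasFDerivAt (fun q : ℂ × ℂ × ℂ => a * Complex.normSq q.2.2 + b * Complex.normSq (P q))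
      (a • ((Dsq p.2.2).comp P3) + b • ((Dsq (P p)).comp P)) p := by
  have h3 : HasFDerivAt (fun q : ℂ × ℂ × ℂ => Complex.normSq q.2.2)
      ((Dsq p.2.2).comp P3) p := (hasFDerivAt_normSq' p.2.2).comp p (P3.hasFDerivAt)
  have hP : HasFDerivAt (fun q : ℂ × ℂ × ℂ => Complex.normSq (P q))
      ((Dsq (P p)).comp P) p := (hasFDerivAt_normSq' (P p)).comp p (P.hasFDerivAt)
  exact (h3.const_mul a).add (hP.const_mul b)

set_option maxHeartbeats 1000000 in
theorem singular_locus_of_critical_fibre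
    (A B C : ℝ) (hA : 0 < A) (hB : 0 < B) (hC : 0 < C) (t : ℝ) (ht : 0 < t) :
    ∀ p : ℂ × ℂ × ℂ,
      (A * Complex.normSq p.2.2 + B * Complex.normSq p.1 = t ∧
       A * Complex.normSq p.2.2 + C * Complex.normSq p.2.1 = t) →
      (¬ LinearIndependent ℝ
          ![fderiv ℝ (fun q : ℂ × ℂ × ℂ =>
              A * Complex.normSq q.2.2 + B * Complex.normSq q.1) p,
            fderiv ℝ (fun q : ℂ × ℂ × ℂ =>
              A * Complex.normSq q.2.2 + C * Complex.normSq q.2.1) p] ↔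
        (p.1 = 0 ∧ p.2.1 = 0 ∧ A * Complex.normSq p.2.2 = t)) := by
  intro p ⟨h1, h2⟩
  have hd1 : fderiv ℝ (fun q : ℂ × ℂ × ℂ =>
      A * Complex.normSq q.2.2 + B * Complex.normSq q.1) p
      = A • ((Dsq p.2.2).comp P3) + B • ((Dsq p.1).comp P1) :=
    (myHasFDeriv A B p P1).fderiv
  have hd2 : fderiv ℝ (fun q : ℂ × ℂ × ℂ =>
      A * Complex.normSq q.2.2 + C * Complex.normSq q.2.1) p
      = A • ((Dsq p.2.2).comp P3) + C • ((Dsq p.2.1).comp P2) :=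
    (myHasFDeriv A C p P2).fderiv
  rw [hd1, hd2]
  set D1 := A • ((Dsq p.2.2).comp P3) + B • ((Dsq p.1).comp P1) with hD1
  set D2 := A • ((Dsq p.2.2).comp P3) + C • ((Dsq p.2.1).comp P2) with hD2
  have e1 : ∀ h : ℂ × ℂ × ℂ, D1 h = A * Dsq p.2.2 h.2.2 + B * Dsq p.1 h.1 := by
    intro h; simp [hD1, P1, P3]
  have e2 : ∀ h : ℂ × ℂ × ℂ, D2 h = A * Dsq p.2.2 h.2.2 + C * Dsq p.2.1 h.2.1 := by
    intro h; simp [hD2, P2, P3]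
  constructor
  · intro hli
    rw [Fintype.not_linearIndependent_iff] at hli
    obtain ⟨g, hg, i, hi⟩ := hli
    have hsum : ∀ h : ℂ × ℂ × ℂ, g 0 * D1 h + g 1 * D2 h = 0 := by
      intro h
      have := congrArg (fun L : (ℂ × ℂ × ℂ) →L[ℝ] ℝ => L h) hg
      simpa [Fin.sum_univ_two] using this
    have tw := hsum (p.1, 0, 0)
    have tu := hsum (0, p.2.1, 0)
    have tv := hsum (0, 0, p.2.2)
    simp only [e1, e2, Dsq_self] at tw tu tv
    simp only [Dsq, map_zero, ContinuousLinearMap.add_apply, ContinuousLinearMap.smul_apply,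
      Complex.zero_re, Complex.zero_im, smul_eq_mul, mul_zero, zero_mul, add_zero, zero_add,
      Complex.reCLM_apply, Complex.imCLM_apply] at tw tu tv
    -- tw : g 0 * (B * (2 * normSq p.1)) = 0 (after zero terms vanish), similarly tu, tv
    have key : p.1 = 0 ∧ p.2.1 = 0 := by
      by_contra hcon
      have icases : i = 0 ∨ i = 1 := by fin_cases i <;> simp
      rcases not_and_or.mp hcon with hw | hu
      · have hwsq : 0 < Complex.normSq p.1 := Complex.normSq_pos.mpr hw
        have hg0 : g 0 = 0 :=
          (mul_eq_zero.mp tw).resolve_right (by positivity)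
        have hg1 : g 1 ≠ 0 := by
          intro h0
          rcases icases with rfl | rfl
          · exact hi hg0
          · exact hi h0
        have husq : Complex.normSq p.2.1 = 0 := by
          rcases mul_eq_zero.mp tu with h | h
          · exact absurd h hg1
          · have h2' := (mul_eq_zero.mp h).resolve_left hC.ne'
            linarith
        have hvsq : Complex.normSq p.2.2 = 0 := by
          rw [hg0, zero_mul, zero_add] at tv
          rcases mul_eq_zero.mp tv with h | h
          · exact absurd h hg1
          · have h2' := (mul_eq_zero.mp h).resolve_left hA.ne'
            linarith
        rw [hvsq, husq] at h2; simp at h2; linarith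
      · have husq : 0 < Complex.normSq p.2.1 := Complex.normSq_pos.mpr hu
        have hg1 : g 1 = 0 :=
          (mul_eq_zero.mp tu).resolve_right (by positivity)
        have hg0 : g 0 ≠ 0 := by
          intro h0
          rcases icases with rfl | rfl
          · exact hi h0
          · exact hi hg1
        have hwsq : Complex.normSq p.1 = 0 := by
          rcases mul_eq_zero.mp tw with h | h
          · exact absurd h hg0
          · have h2' := (mul_eq_zero.mp h).resolve_left hB.ne'
            linarith
        have hvsq : Complex.normSq p.2.2 = 0 := by
          rw [hg1, zero_mul, add_zero] at tv
          rcases mul_eq_zero.mp tv with h | h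
          · exact absurd h hg0
          · have h2' := (mul_eq_zero.mp h).resolve_left hA.ne'
            linarith
        rw [hvsq, hwsq] at h1; simp at h1; linarith
    refine ⟨key.1, key.2, ?_⟩
    rw [key.1] at h1; simpa using h1
  · rintro ⟨hw, hu, -⟩
    have hDeq : D1 = D2 := ContinuousLinearMap.ext fun h => by
      rw [e1 h, e2 h, hw, hu]; simp [Dsq]
    intro hli
    rw [linearIndependent_fin2] at hli
    exact hli.2 1 (by simp [hDeq])
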